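/- Let λ ≠ 0 and -1 < w < 1 be real constants and consider the phantom scalar field system x' = (1/2)[3(w-1)x³ - 3x(w(y²-1)+y²+1) - √6 λy²], y' = -(1/2)y[-3(w-1)x² + 3(w+1)(y²-1) + √6 λx]. Then: (i) the zeros of the vector field with y ≥ 0 are exactly the origin O=(0,0) and the point C = (-λ/√6, √(1+λ²/6)); (ii) at C one has Ω_φ = y²-x² = 1 and w_eff = -(x²+y²) + w(1+x²-y²) = -1 - λ²/3 < -1 (phantom acceleration); (iii) the Jacobian matrix at C has eigenvalues -(6+λ²)/2 and -(λ²+3(w+1)), both strictly negative, so C is a hyperbolic sink. -/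

import Mathlib

open Polynomial

/-- `x`-component of the phantom scalar field (exponential potential) vector field. -/
noncomputable def p7x (w lam x y : ℝ) : ℝ :=
  1 / 2 * (3 * (w - 1) * x ^ 3 - 3 * x * (w * (y ^ 2 - 1) + y ^ 2 + 1)
    - Real.sqrt 6 * lam * y ^ 2)

/-- `y`-component of the phantom scalar field (exponential potential) vector field. -/
noncomputable def p7y (w lam x y : ℝ) : ℝ :=
  -(1 / 2) * y * (-3 * (w - 1) * x ^ 2 + 3 * (w + 1) * (y ^ 2 - 1) + Real.sqrt 6 * lam * x)

/-- The phantom dominated critical point `C`. -/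
noncomputable def C7 (lam : ℝ) : ℝ × ℝ := (-lam / Real.sqrt 6, Real.sqrt (1 + lam ^ 2 / 6))

/-- Jacobian matrix of the phantom vector field at a point `p`. -/
noncomputable def jac7 (w lam : ℝ) (p : ℝ × ℝ) : Matrix (Fin 2) (Fin 2) ℝ :=
  !![deriv (fun x => p7x w lam x p.2) p.1, deriv (fun y => p7x w lam p.1 y) p.2;
     deriv (fun x => p7y w lam x p.2) p.1, deriv (fun y => p7y w lam p.1 y) p.2]

lemma hasDerivAt_cubic (a b c d x0 : ℝ) :
    HasDerivAt (fun x : ℝ => a*x^3 + b*x^2 + c*x + d) (3*a*x0^2 + 2*b*x0 + c) x0 := by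
  have h := (((hasDerivAt_pow 3 x0).const_mul a).add
      ((hasDerivAt_pow 2 x0).const_mul b)).add
      (((hasDerivAt_id x0).const_mul c).add_const d)
  refine HasDerivAt.congr_deriv (h.congr_of_eventuallyEq (Filter.Eventually.of_forall fun x => ?_)) ?_
  · simp only [Pi.add_apply, id]; ring
  · push_cast; ring

lemma charpoly_fin_two' (M : Matrix (Fin 2) (Fin 2) ℝ) :
    M.charpoly = X^2 - C (M 0 0 + M 1 1) * X + C (M 0 0 * M 1 1 - M 0 1 * M 1 0) := by
  rw [Matrix.charpoly, Matrix.det_fin_two]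
  simp [Matrix.charmatrix, Matrix.one_apply, C_add, C_mul, C_sub]
  ring

lemma factor_two (a b : ℝ) :
    (X : ℝ[X])^2 - C (a+b)*X + C (a*b) = (X - C a)*(X - C b) := by
  simp only [C_add, C_mul]; ring

lemma charpoly_eq_of (a b c d e1 e2 : ℝ) (h1 : a + d = e1 + e2) (h2 : a*d - b*c = e1*e2) :
    (!![a,b;c,d] : Matrix (Fin 2) (Fin 2) ℝ).charpoly = (X - C e1)*(X - C e2) := by
  have e00 : (!![a,b;c,d] : Matrix (Fin 2) (Fin 2) ℝ) 0 0 = a := rfl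
  have e01 : (!![a,b;c,d] : Matrix (Fin 2) (Fin 2) ℝ) 0 1 = b := rfl
  have e10 : (!![a,b;c,d] : Matrix (Fin 2) (Fin 2) ℝ) 1 0 = c := rfl
  have e11 : (!![a,b;c,d] : Matrix (Fin 2) (Fin 2) ℝ) 1 1 = d := rfl
  rw [charpoly_fin_two', e00, e01, e10, e11, h1, h2, factor_two]

set_option maxHeartbeats 2000000 in
/-- Phantom scalar field with exponential potential: the fixed points in `y ≥ 0` are exactly
the origin `O` and the phantom-dominated point `C = (-λ/√6, √(1+λ²/6))`, where `Ω_φ = 1` and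
`w_eff = -1-λ²/3 < -1`; the Jacobian at `C` has eigenvalues `-(6+λ²)/2` and `-(λ²+3(w+1))`,
both strictly negative, so `C` is a hyperbolic sink. -/
theorem phantom_critical_points (w lam : ℝ) (hlam : lam ≠ 0) (hw1 : -1 < w) (hw2 : w < 1) :
    ({p : ℝ × ℝ | 0 ≤ p.2 ∧ p7x w lam p.1 p.2 = 0 ∧ p7y w lam p.1 p.2 = 0}
        = {(0, 0), C7 lam}) ∧
    ((C7 lam).2 ^ 2 - (C7 lam).1 ^ 2 = 1 ∧
      -((C7 lam).1 ^ 2 + (C7 lam).2 ^ 2) + w * (1 + (C7 lam).1 ^ 2 - (C7 lam).2 ^ 2)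
        = -1 - lam ^ 2 / 3 ∧
      -1 - lam ^ 2 / 3 < -1) ∧
    ((jac7 w lam (C7 lam)).charpoly
        = (X - C (-((6 + lam ^ 2) / 2))) * (X - C (-(lam ^ 2 + 3 * (w + 1)))) ∧
      -((6 + lam ^ 2) / 2) < 0 ∧ -(lam ^ 2 + 3 * (w + 1)) < 0) := by
  obtain ⟨s, hs, hs0, hseq⟩ : ∃ s : ℝ, s^2 = 6 ∧ 0 < s ∧ Real.sqrt 6 = s :=
    ⟨_, Real.sq_sqrt (by norm_num), Real.sqrt_pos.mpr (by norm_num), rfl⟩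
  have hsne : s ≠ 0 := ne_of_gt hs0
  obtain ⟨t, ht2, ht0, hteq⟩ :
      ∃ t : ℝ, t^2 = 1 + lam^2/6 ∧ 0 ≤ t ∧ Real.sqrt (1 + lam^2/6) = t :=
    ⟨_, Real.sq_sqrt (by positivity), Real.sqrt_nonneg _, rfl⟩
  have hC1 : (C7 lam).1 = -lam/s := by simp [C7, hseq]
  have hC2 : (C7 lam).2 = t := by simp [C7, hteq]
  have hlam2 : 0 < lam^2 := by positivity
  refine ⟨?_, ⟨?_, ?_, ?_⟩, ?_, ?_, ?_⟩
  · -- the fixed point set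
    ext ⟨x, y⟩
    simp only [Set.mem_setOf_eq, Set.mem_insert_iff, Set.mem_singleton_iff,
      Prod.ext_iff, hC1, hC2]
    constructor
    · rintro ⟨hy, h1, h2⟩
      simp only [p7x, hseq] at h1
      simp only [p7y, hseq] at h2
      have E1 : 3*(w-1)*x^3 - 3*x*(w*(y^2-1)+y^2+1) - s*lam*y^2 = 0 := by linarith
      rcases eq_or_ne y 0 with hy0 | hyne
      · subst hy0
        left
        refine ⟨?_, rfl⟩
        have hfac : (w-1)*x*(x^2+1) = 0 := by linear_combination (2/3)*h1
        rcases mul_eq_zero.1 hfac with h | h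
        · rcases mul_eq_zero.1 h with h' | h'
          · exact absurd h' (by intro hh; linarith)
          · exact h'
        · nlinarith
      · right
        have E2 : -3*(w-1)*x^2 + 3*(w+1)*(y^2-1) + s*lam*x = 0 := by
          have h2' : y * (-3*(w-1)*x^2 + 3*(w+1)*(y^2-1) + s*lam*x) = 0 := by
            linear_combination (-2)*h2
          rcases mul_eq_zero.1 h2' with h' | h'
          · exact absurd h' hyne
          · exact h'
        have key : s*lam*(x^2 - y^2) - 6*x = 0 := by linear_combination E1 + x*E2
        have quad : (s*x + lam) * (s*lam*x - 3*(w+1)) = 0 := by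
          linear_combination (s*(w+1)/2)*key + (s^2*lam/6)*E2 + ((w+1)*lam/2 - s*lam^2*x/6)*hs
        rcases mul_eq_zero.1 quad with f1 | f2
        · have hx : x = -lam/s := by field_simp; linarith
          have h6 : 6*lam*y^2 = 6*lam*(1+lam^2/6) := by
            linear_combination (-s)*key + (lam*(s*x-lam)-6)*f1 + (-(lam*y^2))*hs
          have hy2 : y^2 = 1 + lam^2/6 :=
            mul_left_cancel₀ (show (6:ℝ)*lam ≠ 0 by positivity)
              (by linarith : (6*lam)*y^2 = (6*lam)*(1+lam^2/6))
          refine ⟨hx, ?_⟩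
          rw [← hteq, ← hy2, Real.sqrt_sq hy]
        · exfalso
          have hG : 6*lam^2*y^2 = 9*(w+1)*(w-1) := by
            linear_combination (-(s*lam))*key + (s*lam*x + 3*(w+1) - 6)*f2 + (-(lam^2*y^2))*hs
          have h2' : 0 < y^2 := by positivity
          nlinarith [mul_pos hlam2 h2']
    · rintro (⟨hx, hy⟩ | ⟨hx, hy⟩)
      · rw [hx, hy]
        refine ⟨le_refl 0, ?_, ?_⟩ <;> simp [p7x, p7y]
      · rw [hx, hy, ← hteq]
        rw [hteq]
        refine ⟨ht0, ?_, ?_⟩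
        · simp only [p7x, hseq]
          field_simp
          linear_combination (3*lam*(w*(t^2-1)+t^2+1) - lam*t^2*(s^2+6))*hs
            + (18*lam*(w-1))*ht2
        · simp only [p7y, hseq]
          field_simp
          linear_combination (-t*(3*(w+1)*(t^2-1) - lam^2))*hs + (-18*t*(w+1))*ht2
  · rw [hC1, hC2]
    field_simp
    linear_combination (lam^2/6)*hs + s^2*ht2
  · rw [hC1, hC2]
    field_simp
    linear_combination ((1-w)*lam^2/2)*hs + (-3*(1+w)*s^2)*ht2
  · linarith
  · -- charpoly
    have ha : deriv (fun x => p7x w lam x t) (-lam/s) = ((w-2)*lam^2-6)/2 := by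
      have hfe : (fun x => p7x w lam x t)
          = fun x => (3*(w-1)/2)*x^3 + 0*x^2 + (-(3/2)*(w*(t^2-1)+t^2+1))*x
              + (-(s*lam*t^2/2)) := by
        funext x; simp only [p7x, hseq]; ring
      rw [hfe, (hasDerivAt_cubic _ _ _ _ _).deriv]
      have hx2 : (-lam/s)^2 = lam^2/6 := by field_simp; linear_combination -hs
      linear_combination (9*(w-1)/2)*hx2 + (-(3/2)*(w+1))*ht2
    have hb : deriv (fun y => p7x w lam (-lam/s) y) t = t*(lam*(3*w-3))/s := by
      have hfe : (fun y => p7x w lam (-lam/s) y)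
          = fun y => 0*y^3 + ((-3*(-lam/s)*(w+1) - s*lam)/2)*y^2 + 0*y
              + ((3*(w-1)*(-lam/s)^3 + 3*(-lam/s)*(w-1))/2) := by
        funext y; simp only [p7x, hseq]; ring
      rw [hfe, (hasDerivAt_cubic _ _ _ _ _).deriv]
      field_simp
      ring_nf
      linear_combination (-(t*lam))*hs
    have hc : deriv (fun x => p7y w lam x t) (-lam/s) = -3*w*lam*t/s := by
      have hfe : (fun x => p7y w lam x t)
          = fun x => 0*x^3 + ((3*(w-1)*t)/2)*x^2 + (-(s*lam*t)/2)*x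
              + (-(3/2)*(w+1)*(t^2-1)*t) := by
        funext x; simp only [p7y, hseq]; ring
      rw [hfe, (hasDerivAt_cubic _ _ _ _ _).deriv]
      field_simp
      ring_nf
      linear_combination (-(s*t))*hs
    have hd : deriv (fun y => p7y w lam (-lam/s) y) t = -(w+1)*(lam^2+6)/2 := by
      have hfe : (fun y => p7y w lam (-lam/s) y)
          = fun y => (-(3/2)*(w+1))*y^3 + 0*y^2
              + ((3*(w-1)*(-lam/s)^2 + 3*(w+1) - s*lam*(-lam/s))/2)*y + 0 := by
        funext y; simp only [p7y, hseq]; ring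
      rw [hfe, (hasDerivAt_cubic _ _ _ _ _).deriv]
      have hx2 : (-lam/s)^2 = lam^2/6 := by field_simp; linear_combination -hs
      have hsx : s*(-lam/s) = -lam := by field_simp
      linear_combination (-(9/2)*(w+1))*ht2 + ((3/2)*(w-1))*hx2 + (-(lam/2))*hsx
    have hM : jac7 w lam (C7 lam)
        = !![((w-2)*lam^2-6)/2, t*(lam*(3*w-3))/s;
             -3*w*lam*t/s, -(w+1)*(lam^2+6)/2] := by
      simp only [jac7, hC1, hC2]
      rw [ha, hb, hc, hd]
    rw [hM]
    have hsum : ((w-2)*lam^2-6)/2 + -(w+1)*(lam^2+6)/2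
        = -((6 + lam ^ 2) / 2) + -(lam ^ 2 + 3 * (w + 1)) := by ring
    have hprod : ((w-2)*lam^2-6)/2 * (-(w+1)*(lam^2+6)/2)
          - (t*(lam*(3*w-3))/s) * (-3*w*lam*t/s)
        = -((6 + lam ^ 2) / 2) * -(lam ^ 2 + 3 * (w + 1)) := by
      field_simp
      linear_combination (lam^2*(w-w^2)*(lam^2+6))*hs + (36*w*(w-1)*lam^2)*ht2
    exact charpoly_eq_of _ _ _ _ _ _ hsum hprod
  · linarith
  · linarith
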